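/- Let z be a move such that both z⁺ and z⁻ are indispensable monomials. Then every 1-norm reducing set of moves B contains z or −z. -/

import Mathlib

open scoped BigOperators

section Defs

variable {ι κ : Type*} [Fintype ι]

/-- Embed a frequency vector `x ∈ ℕ^ι` into `ℤ^ι`. -/
def natToInt (x : ι → ℕ) : ι → ℤ := fun i => (x i : ℤ)

/-- The fiber of `t`: all frequency vectors `x` with `A x = t`. -/
def fiberOf (A : Matrix κ ι ℤ) (t : κ → ℤ) : Set (ι → ℕ) :=
  {x | A.mulVec (natToInt x) = t}

/-- A move for `A`: an integer vector in the kernel of `A`. -/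
def IsMove (A : Matrix κ ι ℤ) (z : ι → ℤ) : Prop := A.mulVec z = 0

/-- The positive part `z⁺` of an integer vector, as a frequency vector. -/
def posOf (z : ι → ℤ) : ι → ℕ := fun i => (z i).toNat

/-- The negative part `z⁻` of an integer vector, as a frequency vector. -/
def negOf (z : ι → ℤ) : ι → ℕ := fun i => (-z i).toNat

/-- The degree of a move: `deg z = |z⁺|`. -/
def degOf (z : ι → ℤ) : ℕ := ∑ i, posOf z i

/-- One step: add or subtract one move of `B`, staying in `ℕ^ι`. -/
def MStep (B : Set (ι → ℤ)) (x y : ι → ℕ) : Prop :=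
  ∃ z ∈ B, natToInt y = natToInt x + z ∨ natToInt y = natToInt x - z

/-- `y` is accessible from `x` by the moves of `B` (staying nonnegative throughout,
since all intermediate points are frequency vectors). -/
def Accessible (B : Set (ι → ℤ)) : (ι → ℕ) → (ι → ℕ) → Prop :=
  Relation.ReflTransGen (MStep B)

/-- A Markov basis: a finite set of moves such that every fiber forms a single
equivalence class for mutual accessibility. -/
def IsMarkovBasis (A : Matrix κ ι ℤ) (B : Set (ι → ℤ)) : Prop :=
  B.Finite ∧ (∀ z ∈ B, IsMove A z) ∧
    ∀ t : κ → ℤ, ∀ x ∈ fiberOf A t, ∀ y ∈ fiberOf A t, Accessible B x y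

/-- A minimal Markov basis: no proper subset is a Markov basis. -/
def IsMinimalMarkovBasis (A : Matrix κ ι ℤ) (B : Set (ι → ℤ)) : Prop :=
  IsMarkovBasis A B ∧ ∀ B' ⊂ B, ¬ IsMarkovBasis A B'

/-- An indispensable monomial: every Markov basis contains a move whose
positive or negative part is `x`. -/
def IsIndispensableMonomial (A : Matrix κ ι ℤ) (x : ι → ℕ) : Prop :=
  ∀ B : Set (ι → ℤ), IsMarkovBasis A B → ∃ z ∈ B, posOf z = x ∨ negOf z = x

/-- `B_n`: the set of moves of degree at most `n`. -/
def Bmoves (A : Matrix κ ι ℤ) (n : ℕ) : Set (ι → ℤ) :=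
  {z | IsMove A z ∧ degOf z ≤ n}

/-- The sample size `|t|` of a sufficient statistic `t` (well defined on nonempty
fibers under homogeneity). -/
noncomputable def sampleSize (A : Matrix κ ι ℤ) (t : κ → ℤ) : ℕ :=
  sInf {n | ∃ x ∈ fiberOf A t, ∑ i, x i = n}

/-- The `B_{|t|-1}`-equivalence classes of the fiber of `t`. -/
noncomputable def fiberClasses (A : Matrix κ ι ℤ) (t : κ → ℤ) : Set (Set (ι → ℕ)) :=
  {C | ∃ x ∈ fiberOf A t,
    C = {y | y ∈ fiberOf A t ∧ Accessible (Bmoves A (sampleSize A t - 1)) x y}}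

/-- Homogeneity: some rational vector `w` has `w ⬝ aᵢ = 1` for every column `aᵢ`. -/
def IsHomogeneousMatrix [Fintype κ] (A : Matrix κ ι ℤ) : Prop :=
  ∃ w : κ → ℚ, ∀ i : ι, ∑ j, w j * (A j i : ℚ) = 1

end Defs

/-- A set of moves `B` is 1-norm reducing: for distinct `x, y` in a common fiber, some
`z ∈ B` applied with sign `ε` to `x` or to `y` strictly decreases the ℓ¹ distance. -/
def IsNormReducing {ι κ : Type*} [Fintype ι] (A : Matrix κ ι ℤ) (B : Set (ι → ℤ)) :
    Prop :=
  ∀ t : κ → ℤ, ∀ x ∈ fiberOf A t, ∀ y ∈ fiberOf A t, x ≠ y →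
    ∃ z ∈ B, ∃ ε : ℤ, (ε = 1 ∨ ε = -1) ∧
      (((∀ i, 0 ≤ natToInt x i + ε * z i) ∧
          ∑ i, |natToInt x i + ε * z i - natToInt y i| <
            ∑ i, |natToInt x i - natToInt y i|) ∨
        ((∀ i, 0 ≤ natToInt y i + ε * z i) ∧
          ∑ i, |natToInt x i - (natToInt y i + ε * z i)| <
            ∑ i, |natToInt x i - natToInt y i|))

section AuxLemmas
set_option linter.unusedSectionVars false

variable {ι κ : Type*} [Fintype ι] [Fintype κ]

lemma move_sum_zero {A : Matrix κ ι ℤ} (hA : IsHomogeneousMatrix A)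
    {z : ι → ℤ} (hz : IsMove A z) : ∑ i, z i = 0 := by
  obtain ⟨w, hw⟩ := hA
  have h : ∑ j, w j * (((A.mulVec z) j : ℤ) : ℚ) = 0 := by
    rw [hz]; simp
  have h2 : ∑ i, (z i : ℚ) = 0 := by
    rw [← h]
    simp only [Matrix.mulVec, dotProduct]
    push_cast
    calc ∑ i, (z i : ℚ) = ∑ i, (∑ j, w j * (A j i : ℚ)) * z i := by
          refine Finset.sum_congr rfl (fun i _ => ?_); rw [hw i, one_mul]
      _ = ∑ i, ∑ j, w j * ((A j i : ℚ) * z i) := by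
          refine Finset.sum_congr rfl (fun i _ => ?_)
          rw [Finset.sum_mul]; exact Finset.sum_congr rfl (fun j _ => by ring)
      _ = ∑ j, ∑ i, w j * ((A j i : ℚ) * z i) := Finset.sum_comm
      _ = ∑ j, w j * ∑ i, (A j i : ℚ) * z i := by
          refine Finset.sum_congr rfl (fun j _ => ?_); rw [Finset.mul_sum]
  exact_mod_cast h2

lemma natToInt_pos_sub_neg (z : ι → ℤ) (i : ι) :
    (posOf z i : ℤ) - (negOf z i : ℤ) = z i := by
  simp only [posOf, negOf]; omega

lemma sum_posOf_eq_sum_negOf {A : Matrix κ ι ℤ} (hA : IsHomogeneousMatrix A)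
    {z : ι → ℤ} (hz : IsMove A z) : ∑ i, posOf z i = ∑ i, negOf z i := by
  have h := move_sum_zero hA hz
  have : (∑ i, (posOf z i : ℤ)) - ∑ i, (negOf z i : ℤ) = 0 := by
    rw [← Finset.sum_sub_distrib]
    rw [Finset.sum_congr rfl (fun i _ => natToInt_pos_sub_neg z i)]
    exact h
  exact_mod_cast sub_eq_zero.mp this

lemma mstep_symm {B : Set (ι → ℤ)} {u v : ι → ℕ} (h : MStep B u v) : MStep B v u := by
  obtain ⟨b, hb, h | h⟩ := h
  · exact ⟨b, hb, Or.inr (by rw [h]; funext i; simp)⟩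
  · exact ⟨b, hb, Or.inl (by rw [h]; funext i; simp)⟩

end AuxLemmas
section Aux2
set_option linter.unusedSectionVars false
variable {ι κ : Type*} [Fintype ι] [Fintype κ]

lemma normReducing_isMarkov (A : Matrix κ ι ℤ) (B : Set (ι → ℤ)) (hfin : B.Finite)
    (hmoves : ∀ b ∈ B, IsMove A b) (hB : IsNormReducing A B) : IsMarkovBasis A B := by
  refine ⟨hfin, hmoves, ?_⟩
  suffices H : ∀ n : ℕ, ∀ t : κ → ℤ, ∀ x ∈ fiberOf A t, ∀ y ∈ fiberOf A t,
      (∑ i, |natToInt x i - natToInt y i|).toNat ≤ n → Accessible B x y by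
    intro t x hx y hy; exact H _ t x hx y hy le_rfl
  intro n
  induction n with
  | zero =>
    intro t x hx y hy hle
    have hxy : x = y := by
      have h0 : ∑ i, |natToInt x i - natToInt y i| = 0 := by
        have hnn : 0 ≤ ∑ i, |natToInt x i - natToInt y i| :=
          Finset.sum_nonneg (fun i _ => abs_nonneg _)
        omega
      have := (Finset.sum_eq_zero_iff_of_nonneg
        (fun i _ => abs_nonneg (natToInt x i - natToInt y i))).mp h0
      funext i
      have hi := this i (Finset.mem_univ i)
      have : natToInt x i = natToInt y i := by
        have := abs_eq_zero.mp hi; omega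
      simpa [natToInt] using this
    rw [hxy]; exact Relation.ReflTransGen.refl
  | succ n ih =>
    intro t x hx y hy hle
    by_cases hxy : x = y
    · rw [hxy]; exact Relation.ReflTransGen.refl
    obtain ⟨b, hbB, ε, hε, hcase⟩ := hB t x hx y hy hxy
    have hεsq : ε * ε = 1 := by rcases hε with rfl | rfl <;> ring
    rcases hcase with ⟨hnn, hlt⟩ | ⟨hnn, hlt⟩
    · set x₂ : ι → ℕ := fun i => (natToInt x i + ε * b i).toNat with hx₂def
      have hx₂ : ∀ i, natToInt x₂ i = natToInt x i + ε * b i := by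
        intro i; exact Int.toNat_of_nonneg (hnn i)
      have hfun : natToInt x₂ = natToInt x + ε • b := funext fun i => by
        rw [hx₂ i]; rfl
      have hx₂fib : x₂ ∈ fiberOf A t := by
        show A.mulVec (natToInt x₂) = t
        rw [hfun, Matrix.mulVec_add, Matrix.mulVec_smul, hmoves b hbB]
        rw [smul_zero, add_zero]; exact hx
      have step : MStep B x x₂ := by
        refine ⟨b, hbB, ?_⟩
        rcases hε with rfl | rfl
        · exact Or.inl (funext fun i => by rw [hx₂ i, Pi.add_apply]; ring)
        · exact Or.inr (funext fun i => by rw [hx₂ i, Pi.sub_apply]; ring)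
      have hmeas : (∑ i, |natToInt x₂ i - natToInt y i|).toNat ≤ n := by
        have hrw : ∑ i, |natToInt x₂ i - natToInt y i|
            = ∑ i, |natToInt x i + ε * b i - natToInt y i| :=
          Finset.sum_congr rfl (fun i _ => by rw [hx₂ i])
        have h1 : 0 ≤ ∑ i, |natToInt x₂ i - natToInt y i| :=
          Finset.sum_nonneg (fun i _ => abs_nonneg _)
        rw [hrw] at h1
        omega
      exact Relation.ReflTransGen.head step (ih t x₂ hx₂fib y hy hmeas)
    · set y₂ : ι → ℕ := fun i => (natToInt y i + ε * b i).toNat with hy₂def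
      have hy₂ : ∀ i, natToInt y₂ i = natToInt y i + ε * b i := by
        intro i; exact Int.toNat_of_nonneg (hnn i)
      have hfun : natToInt y₂ = natToInt y + ε • b := funext fun i => by
        rw [hy₂ i]; rfl
      have hy₂fib : y₂ ∈ fiberOf A t := by
        show A.mulVec (natToInt y₂) = t
        rw [hfun, Matrix.mulVec_add, Matrix.mulVec_smul, hmoves b hbB]
        rw [smul_zero, add_zero]; exact hy
      have step : MStep B y y₂ := by
        refine ⟨b, hbB, ?_⟩
        rcases hε with rfl | rfl
        · exact Or.inl (funext fun i => by rw [hy₂ i, Pi.add_apply]; ring)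
        · exact Or.inr (funext fun i => by rw [hy₂ i, Pi.sub_apply]; ring)
      have hmeas : (∑ i, |natToInt x i - natToInt y₂ i|).toNat ≤ n := by
        have hrw : ∑ i, |natToInt x i - natToInt y₂ i|
            = ∑ i, |natToInt x i - (natToInt y i + ε * b i)| :=
          Finset.sum_congr rfl (fun i _ => by rw [hy₂ i])
        have h1 : 0 ≤ ∑ i, |natToInt x i - natToInt y₂ i| :=
          Finset.sum_nonneg (fun i _ => abs_nonneg _)
        rw [hrw] at h1
        omega
      exact Relation.ReflTransGen.tail (ih t x hx y₂ hy₂fib hmeas) (mstep_symm step)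

end Aux2
section Aux3
set_option linter.unusedSectionVars false
set_option maxHeartbeats 1000000
variable {ι κ : Type*} [Fintype ι] [Fintype κ]

lemma sum_le_pointwise_eq {a c : ι → ℕ} (hle : ∀ i, a i ≤ c i)
    (hs : ∑ i, a i = ∑ i, c i) : ∀ i, a i = c i := by
  intro i
  exact (Finset.sum_eq_sum_iff_of_le (fun i _ => hle i)).mp hs i (Finset.mem_univ i)

lemma mulVec_pos_eq_neg {A : Matrix κ ι ℤ} {b : ι → ℤ} (hb : IsMove A b) :
    A.mulVec (natToInt (posOf b)) = A.mulVec (natToInt (negOf b)) := by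
  have hsub : natToInt (posOf b) - natToInt (negOf b) = b := by
    funext i
    exact natToInt_pos_sub_neg b i
  have h := congrArg A.mulVec hsub
  rw [Matrix.mulVec_sub, hb] at h
  exact sub_eq_zero.mp h

lemma isolation {A : Matrix κ ι ℤ} (hA : IsHomogeneousMatrix A)
    {x : ι → ℕ} (hx : IsIndispensableMonomial A x) (hx0 : x ≠ 0)
    {B : Set (ι → ℤ)} (hBM : IsMarkovBasis A B)
    {m : ι → ℤ} (hm : IsMove A m) (hm0 : m ≠ 0)
    (hge : ∀ i, 0 ≤ (x i : ℤ) + m i)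
    (hdeg : ∑ i, posOf m i < ∑ i, x i) : False := by
  classical
  obtain ⟨hBfin, hBmov, hBacc⟩ := hBM
  set n := ∑ i, x i with hn
  set x' : ι → ℕ := fun i => ((x i : ℤ) + m i).toNat with hx'def
  have hx' : ∀ i, (x' i : ℤ) = (x i : ℤ) + m i := fun i => Int.toNat_of_nonneg (hge i)
  have hx'x : natToInt x' = natToInt x + m := funext fun i => by
    rw [Pi.add_apply]; exact hx' i
  have hmsum : ∑ i, m i = 0 := move_sum_zero hA hm
  have hx'sum : ∑ i, x' i = n := by
    have h1 : (∑ i, (x' i : ℤ)) = ∑ i, ((x i : ℤ) + m i) :=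
      Finset.sum_congr rfl fun i _ => hx' i
    rw [Finset.sum_add_distrib, hmsum, add_zero] at h1
    exact_mod_cast h1
  have hx'ne : x' ≠ x := by
    intro h
    apply hm0
    funext i
    have h1 := hx' i
    rw [h] at h1
    show m i = 0
    omega
  set f : (ι → ℤ) → (ι → ℤ) := fun b => natToInt x' - natToInt (negOf b) with hf
  set g : (ι → ℤ) → (ι → ℤ) := fun b => natToInt (posOf b) - natToInt x' with hg
  set Bad : Set (ι → ℤ) := {b | posOf b = x ∨ negOf b = x} with hBad
  set B' : Set (ι → ℤ) :=
    ((B \ Bad) ∪ {m}) ∪ (f '' (B ∩ {b | posOf b = x})) ∪ (g '' (B ∩ {b | negOf b = x}))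
    with hB'
  have hmB' : m ∈ B' := by rw [hB']; left; left; right; rfl
  have hfB' : ∀ b ∈ B, posOf b = x → f b ∈ B' := by
    intro b hbB hb1
    rw [hB']; left; right; exact ⟨b, ⟨hbB, hb1⟩, rfl⟩
  have hgB' : ∀ b ∈ B, negOf b = x → g b ∈ B' := by
    intro b hbB hb2
    rw [hB']; right; exact ⟨b, ⟨hbB, hb2⟩, rfl⟩
  have hplain : ∀ b ∈ B, ¬(posOf b = x ∨ negOf b = x) → b ∈ B' := by
    intro b hbB hnb
    rw [hB']; left; left; left; exact ⟨hbB, hnb⟩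
  -- every element of B' is a move
  have hmvf : ∀ b ∈ B, posOf b = x → IsMove A (f b) := by
    intro b hbB hb1
    show A.mulVec (f b) = 0
    rw [hf]
    show A.mulVec (natToInt x' - natToInt (negOf b)) = 0
    rw [Matrix.mulVec_sub, hx'x, Matrix.mulVec_add, hm, add_zero,
      ← mulVec_pos_eq_neg (hBmov b hbB), hb1, sub_self]
  have hmvg : ∀ b ∈ B, negOf b = x → IsMove A (g b) := by
    intro b hbB hb2
    show A.mulVec (g b) = 0
    rw [hg]
    show A.mulVec (natToInt (posOf b) - natToInt x') = 0
    rw [Matrix.mulVec_sub, hx'x, Matrix.mulVec_add, hm, add_zero,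
      mulVec_pos_eq_neg (hBmov b hbB), hb2, sub_self]
  have hB'mov : ∀ b' ∈ B', IsMove A b' := by
    intro b' hb'
    rw [hB'] at hb'
    simp only [Set.mem_union, Set.mem_diff, Set.mem_singleton_iff, Set.mem_image,
      Set.mem_inter_iff, Set.mem_setOf_eq] at hb'
    rcases hb' with ((⟨hb, -⟩ | rfl) | ⟨b, ⟨hbB, hb1⟩, rfl⟩) | ⟨b, ⟨hbB, hb2⟩, rfl⟩
    · exact hBmov _ hb
    · exact hm
    · exact hmvf b hbB hb1
    · exact hmvg b hbB hb2
  have hB'fin : B'.Finite := by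
    rw [hB']
    exact (((hBfin.diff).union (Set.finite_singleton m)).union
      ((hBfin.inter_of_left _).image f)).union ((hBfin.inter_of_left _).image g)
  -- simulation of single B-steps by B'-paths
  have sim : ∀ u v : ι → ℕ, MStep B u v → Accessible B' u v := by
    intro u v hst
    obtain ⟨b, hbB, hstep⟩ := hst
    by_cases hb1 : posOf b = x
    · have hpb : ∀ i, ((b i).toNat : ℤ) = (x i : ℤ) := fun i => by
        have h0 := congrFun hb1 i
        simp only [posOf] at h0
        exact_mod_cast h0
      rcases hstep with h | h
      · -- v = u + b : go u → u + f b → v = (u + f b) - m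
        have hub : ∀ i, 0 ≤ (u i : ℤ) + b i := fun i => by
          have h1 := congrFun h i
          simp only [natToInt, Pi.add_apply] at h1
          have h2 : (0 : ℤ) ≤ (v i : ℤ) := Int.ofNat_nonneg _
          omega
        set w : ι → ℕ := fun i => ((u i : ℤ) + (x' i : ℤ) - ((-b i).toNat : ℤ)).toNat
          with hwdef
        have hw : ∀ i, (w i : ℤ) = (u i : ℤ) + (x' i : ℤ) - ((-b i).toNat : ℤ) := by
          intro i
          refine Int.toNat_of_nonneg ?_
          have h1 := hub i
          have h2 : (0 : ℤ) ≤ (x' i : ℤ) := Int.ofNat_nonneg _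
          omega
        have s1 : MStep B' u w := by
          refine ⟨f b, hfB' b hbB hb1, Or.inl (funext fun i => ?_)⟩
          have h4 := hw i
          simp only [natToInt, Pi.add_apply, Pi.sub_apply, hf, negOf]
          omega
        have s2 : MStep B' w v := by
          refine ⟨m, hmB', Or.inr (funext fun i => ?_)⟩
          have h1 := congrFun h i
          simp only [natToInt, Pi.add_apply, Pi.sub_apply] at h1 ⊢
          have h2 := hpb i
          have h3 := hx' i
          have h4 := hw i
          omega
        exact Relation.ReflTransGen.head s1 (Relation.ReflTransGen.single s2)
      · -- v = u - b : go u → u + m → v = (u + m) - f b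
        have hub : ∀ i, (x i : ℤ) ≤ (u i : ℤ) := fun i => by
          have h1 := congrFun h i
          simp only [natToInt, Pi.sub_apply] at h1
          have h2 : (0 : ℤ) ≤ (v i : ℤ) := Int.ofNat_nonneg _
          have h3 := hpb i
          omega
        set w : ι → ℕ := fun i => ((u i : ℤ) + m i).toNat with hwdef
        have hw : ∀ i, (w i : ℤ) = (u i : ℤ) + m i := by
          intro i
          refine Int.toNat_of_nonneg ?_
          have h1 := hge i
          have h2 := hub i
          omega
        have s1 : MStep B' u w := by
          refine ⟨m, hmB', Or.inl (funext fun i => ?_)⟩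
          simp only [natToInt, Pi.add_apply]
          exact hw i
        have s2 : MStep B' w v := by
          refine ⟨f b, hfB' b hbB hb1, Or.inr (funext fun i => ?_)⟩
          have h1 := congrFun h i
          simp only [natToInt, Pi.add_apply, Pi.sub_apply, hf, negOf] at h1 ⊢
          have h2 := hpb i
          have h3 := hx' i
          have h4 := hw i
          omega
        exact Relation.ReflTransGen.head s1 (Relation.ReflTransGen.single s2)
    · by_cases hb2 : negOf b = x
      · have hnb : ∀ i, (((-b i).toNat : ℤ)) = (x i : ℤ) := fun i => by
          have h0 := congrFun hb2 i
          simp only [negOf] at h0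
          exact_mod_cast h0
        rcases hstep with h | h
        · -- v = u + b : go u → u + m → v = (u + m) + g b
          have hub : ∀ i, (x i : ℤ) ≤ (u i : ℤ) := fun i => by
            have h1 := congrFun h i
            simp only [natToInt, Pi.add_apply] at h1
            have h2 : (0 : ℤ) ≤ (v i : ℤ) := Int.ofNat_nonneg _
            have h3 := hnb i
            omega
          set w : ι → ℕ := fun i => ((u i : ℤ) + m i).toNat with hwdef
          have hw : ∀ i, (w i : ℤ) = (u i : ℤ) + m i := by
            intro i
            refine Int.toNat_of_nonneg ?_
            have h1 := hge i
            have h2 := hub i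
            omega
          have s1 : MStep B' u w := by
            refine ⟨m, hmB', Or.inl (funext fun i => ?_)⟩
            simp only [natToInt, Pi.add_apply]
            exact hw i
          have s2 : MStep B' w v := by
            refine ⟨g b, hgB' b hbB hb2, Or.inl (funext fun i => ?_)⟩
            have h1 := congrFun h i
            simp only [natToInt, Pi.add_apply, Pi.sub_apply, hg, posOf] at h1 ⊢
            have h2 := hnb i
            have h3 := hx' i
            have h4 := hw i
            omega
          exact Relation.ReflTransGen.head s1 (Relation.ReflTransGen.single s2)
        · -- v = u - b : go u → u - g b → v = (u - g b) - m
          have hub : ∀ i, ((b i).toNat : ℤ) ≤ (u i : ℤ) := fun i => by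
            have h1 := congrFun h i
            simp only [natToInt, Pi.sub_apply] at h1
            have h2 : (0 : ℤ) ≤ (v i : ℤ) := Int.ofNat_nonneg _
            omega
          set w : ι → ℕ := fun i => ((u i : ℤ) - ((b i).toNat : ℤ) + (x' i : ℤ)).toNat
            with hwdef
          have hw : ∀ i, (w i : ℤ) = (u i : ℤ) - ((b i).toNat : ℤ) + (x' i : ℤ) := by
            intro i
            refine Int.toNat_of_nonneg ?_
            have h1 := hub i
            have h2 : (0 : ℤ) ≤ (x' i : ℤ) := Int.ofNat_nonneg _
            omega
          have s1 : MStep B' u w := by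
            refine ⟨g b, hgB' b hbB hb2, Or.inr (funext fun i => ?_)⟩
            have h4 := hw i
            simp only [natToInt, Pi.sub_apply, hg, posOf]
            omega
          have s2 : MStep B' w v := by
            refine ⟨m, hmB', Or.inr (funext fun i => ?_)⟩
            have h1 := congrFun h i
            simp only [natToInt, Pi.sub_apply] at h1 ⊢
            have h2 := hnb i
            have h3 := hx' i
            have h4 := hw i
            omega
          exact Relation.ReflTransGen.head s1 (Relation.ReflTransGen.single s2)
      · exact Relation.ReflTransGen.single
          ⟨b, hplain b hbB (fun hc => hc.elim hb1 hb2), hstep⟩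
  have hB'acc : ∀ t : κ → ℤ, ∀ u ∈ fiberOf A t, ∀ v ∈ fiberOf A t, Accessible B' u v := by
    intro t u hu v hv
    have h := hBacc t u hu v hv
    clear hu hv
    induction h with
    | refl => exact Relation.ReflTransGen.refl
    | tail _ h2 ih => exact ih.trans (sim _ _ h2)
  -- apply indispensability of x to the Markov basis B'
  obtain ⟨b', hb'B', hb'x⟩ := hx B' ⟨hB'fin, hB'mov, hB'acc⟩
  rw [hB'] at hb'B'
  simp only [Set.mem_union, Set.mem_diff, Set.mem_singleton_iff, Set.mem_image,
    Set.mem_inter_iff, Set.mem_setOf_eq] at hb'B'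
  rcases hb'B' with ((⟨-, hbad⟩ | heqm) | ⟨b, ⟨hbB, hb1⟩, rfl⟩) | ⟨b, ⟨hbB, hb2⟩, rfl⟩
  · -- b' survives from B, but it has a part equal to x : contradiction
    exact hbad (by rw [hBad]; exact hb'x)
  · -- b' = m : degree too small
    subst heqm
    have hms : ∑ i, posOf b' i = ∑ i, negOf b' i := sum_posOf_eq_sum_negOf hA hm
    rcases hb'x with hp | hp
    · rw [hp, ← hn] at hdeg; omega
    · have h1 : ∑ i, negOf b' i = n := by rw [hp, hn]
      omega
  · -- b' = f b with posOf b = x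
    have hpsb : ∑ i, posOf b i = n := by rw [hb1, hn]
    have hnsb : ∑ i, negOf b i = n := by
      rw [← sum_posOf_eq_sum_negOf hA (hBmov b hbB)]; exact hpsb
    have hple : ∀ i, posOf (f b) i ≤ x' i := by
      intro i
      simp only [posOf, negOf, hf, Pi.sub_apply, natToInt]
      omega
    have hnle : ∀ i, negOf (f b) i ≤ negOf b i := by
      intro i
      simp only [posOf, negOf, hf, Pi.sub_apply, natToInt]
      omega
    rcases hb'x with hp | hp
    · have hs : ∑ i, posOf (f b) i = ∑ i, x' i := by
        rw [hp, hx'sum, hn]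
      have heq := sum_le_pointwise_eq hple hs
      exact hx'ne (funext fun i => ((heq i).symm.trans (congrFun hp i)))
    · have hs : ∑ i, negOf (f b) i = ∑ i, negOf b i := by
        rw [hp, hnsb, hn]
      have heq := sum_le_pointwise_eq hnle hs
      apply hx0
      funext i
      have h1 := congrFun hp i
      have h2 := heq i
      have h3 := congrFun hb1 i
      show x i = 0
      simp only [posOf, negOf, hf, Pi.sub_apply, natToInt] at h1 h2 h3
      omega
  · -- b' = g b with negOf b = x
    have hnsb : ∑ i, negOf b i = n := by rw [hb2, hn]
    have hpsb : ∑ i, posOf b i = n := by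
      rw [sum_posOf_eq_sum_negOf hA (hBmov b hbB)]; exact hnsb
    have hple : ∀ i, posOf (g b) i ≤ posOf b i := by
      intro i
      simp only [posOf, negOf, hg, Pi.sub_apply, natToInt]
      omega
    have hnle : ∀ i, negOf (g b) i ≤ x' i := by
      intro i
      simp only [posOf, negOf, hg, Pi.sub_apply, natToInt]
      omega
    rcases hb'x with hp | hp
    · have hs : ∑ i, posOf (g b) i = ∑ i, posOf b i := by
        rw [hp, hpsb, hn]
      have heq := sum_le_pointwise_eq hple hs
      apply hx0
      funext i
      have h1 := congrFun hp i
      have h2 := heq i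
      have h3 := congrFun hb2 i
      show x i = 0
      simp only [posOf, negOf, hg, Pi.sub_apply, natToInt] at h1 h2 h3
      omega
    · have hs : ∑ i, negOf (g b) i = ∑ i, x' i := by
        rw [hp, hx'sum, hn]
      have heq := sum_le_pointwise_eq hnle hs
      exact hx'ne (funext fun i => ((heq i).symm.trans (congrFun hp i)))

end Aux3
section MainAux
set_option linter.unusedSectionVars false
variable {ι κ : Type*} [Fintype ι] [Fintype κ]

lemma abs_eq_pos_add_neg (a : ℤ) : |a| = ((a.toNat : ℤ) + ((-a).toNat : ℤ)) := by
  rcases le_or_gt 0 a with h | h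
  · rw [abs_of_nonneg h]; omega
  · rw [abs_of_neg h]; omega

lemma sum_abs_eq_two_deg {A : Matrix κ ι ℤ} (hA : IsHomogeneousMatrix A)
    {w : ι → ℤ} (hw : IsMove A w) :
    ∑ i, |w i| = 2 * ((∑ i, posOf w i : ℕ) : ℤ) := by
  have hpn := sum_posOf_eq_sum_negOf hA hw
  calc ∑ i, |w i| = ∑ i, ((posOf w i : ℤ) + (negOf w i : ℤ)) :=
        Finset.sum_congr rfl fun i _ => by
          simp only [posOf, negOf]; exact abs_eq_pos_add_neg (w i)
    _ = (∑ i, (posOf w i : ℤ)) + ∑ i, (negOf w i : ℤ) := Finset.sum_add_distrib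
    _ = 2 * ((∑ i, posOf w i : ℕ) : ℤ) := by
        have h1 : ((∑ i, negOf w i : ℕ) : ℤ) = ((∑ i, posOf w i : ℕ) : ℤ) := by
          exact_mod_cast hpn.symm
        push_cast at h1 ⊢
        omega

end MainAux

theorem normReducing_contains_move_with_indispensable_parts
    {p d : ℕ} (hp : 0 < p) (hd : 0 < d)
    (A : Matrix (Fin d) (Fin p) ℤ) (hA : IsHomogeneousMatrix A)
    (z : Fin p → ℤ) (hz : IsMove A z)
    (hpos : IsIndispensableMonomial A (posOf z))
    (hneg : IsIndispensableMonomial A (negOf z))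
    (B : Set (Fin p → ℤ)) (hBfin : B.Finite) (hBmoves : ∀ b ∈ B, IsMove A b)
    (hB : IsNormReducing A B) :
    z ∈ B ∨ -z ∈ B := by
  classical
  have hBM : IsMarkovBasis A B := normReducing_isMarkov A B hBfin hBmoves hB
  by_cases hz0 : z = 0
  · -- degenerate case : the only move with a zero part is 0 itself
    subst hz0
    obtain ⟨b, hbB, hb⟩ := hpos B hBM
    have hsb : ∑ i, posOf b i = ∑ i, negOf b i :=
      sum_posOf_eq_sum_negOf hA (hBmoves b hbB)
    have hb0 : b = 0 := by
      rcases hb with hp' | hp'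
      · have h1 : ∀ i, posOf b i = 0 := fun i => by
          have := congrFun hp' i
          simpa [posOf] using this
        have h2 : ∑ i, posOf b i = 0 := Finset.sum_eq_zero fun i _ => h1 i
        rw [h2] at hsb
        have h3 : ∀ i, negOf b i = 0 := fun i =>
          Finset.sum_eq_zero_iff.mp hsb.symm i (Finset.mem_univ i)
        funext i
        have := h1 i
        have := h3 i
        show b i = 0
        simp only [posOf, negOf] at *
        omega
      · have h1 : ∀ i, negOf b i = 0 := fun i => by
          have := congrFun hp' i
          simpa [posOf, negOf] using this
        have h2 : ∑ i, negOf b i = 0 := Finset.sum_eq_zero fun i _ => h1 i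
        rw [h2] at hsb
        have h3 : ∀ i, posOf b i = 0 := fun i =>
          Finset.sum_eq_zero_iff.mp hsb i (Finset.mem_univ i)
        funext i
        have := h1 i
        have := h3 i
        show b i = 0
        simp only [posOf, negOf] at *
        omega
    exact Or.inl (hb0 ▸ hbB)
  · -- main case
    set t := A.mulVec (natToInt (posOf z)) with ht
    have hxfib : posOf z ∈ fiberOf A t := by
      show A.mulVec (natToInt (posOf z)) = t
      rw [ht]
    have hyfib : negOf z ∈ fiberOf A t := by
      show A.mulVec (natToInt (negOf z)) = t
      rw [ht, mulVec_pos_eq_neg hz]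
    have hxy : posOf z ≠ negOf z := by
      intro h
      apply hz0
      funext i
      have := congrFun h i
      simp only [posOf, negOf] at this
      show z i = 0
      omega
    have hnn0 : ∑ i, negOf z i = ∑ i, posOf z i :=
      (sum_posOf_eq_sum_negOf hA hz).symm
    have hn1 : 0 < ∑ i, posOf z i := by
      by_contra hcon
      apply hz0
      have h0 : ∑ i, posOf z i = 0 := by omega
      have h0' : ∑ i, negOf z i = 0 := by omega
      funext i
      have h1 := Finset.sum_eq_zero_iff.mp h0 i (Finset.mem_univ i)
      have h2 := Finset.sum_eq_zero_iff.mp h0' i (Finset.mem_univ i)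
      show z i = 0
      simp only [posOf, negOf] at h1 h2
      omega
    have hx0 : posOf z ≠ 0 := by
      intro h
      rw [h] at hn1
      simp at hn1
    have hy0 : negOf z ≠ 0 := by
      intro h
      rw [h] at hnn0
      simp at hnn0
      omega
    obtain ⟨b, hbB, ε, hε, hcase⟩ := hB t (posOf z) hxfib (negOf z) hyfib hxy
    have hbmv : IsMove A b := hBmoves b hbB
    have hcmove : IsMove A (fun i => ε * b i) := by
      show A.mulVec (fun i => ε * b i) = 0
      have hcs : (fun i => ε * b i) = ε • b := rfl
      rw [hcs, Matrix.mulVec_smul, hbmv, smul_zero]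
    have e2 : ∀ i : Fin p, natToInt (posOf z) i - natToInt (negOf z) i = z i := fun i => by
      simp only [natToInt, posOf, negOf]; omega
    rcases hcase with ⟨hnn, hlt⟩ | ⟨hnn, hlt⟩
    · -- reduction applied at z⁺
      have hlt1 : ∑ i, |z i + ε * b i| < ∑ i, |z i| := by
        have h1 : ∑ i, |natToInt (posOf z) i + ε * b i - natToInt (negOf z) i|
            = ∑ i, |z i + ε * b i| := Finset.sum_congr rfl fun i _ => by
          congr 1
          have := e2 i
          simp only [natToInt, posOf, negOf] at this ⊢
          omega
        have h2 : ∑ i, |natToInt (posOf z) i - natToInt (negOf z) i| = ∑ i, |z i| :=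
          Finset.sum_congr rfl fun i _ => by rw [e2 i]
        rw [h1, h2] at hlt
        exact hlt
      have hc0 : (fun i => ε * b i) ≠ 0 := by
        intro h
        have h1 : ∑ i, |z i + ε * b i| = ∑ i, |z i| := Finset.sum_congr rfl fun i _ => by
          have := congrFun h i
          simp only [Pi.zero_apply] at this
          rw [this, add_zero]
        rw [h1] at hlt1
        exact lt_irrefl _ hlt1
      have hnn' : ∀ i, 0 ≤ ((posOf z i : ℤ)) + (fun i => ε * b i) i := fun i => hnn i
      -- isolation at z⁺ : the reducing move has full degree
      have hdegc : ∑ i, posOf z i ≤ ∑ i, posOf (fun i => ε * b i) i := by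
        by_contra hcon
        exact isolation hA hpos hx0 hBM hcmove hc0 hnn' (by omega)
      -- hence its negative part is exactly z⁺
      have hcneg_le : ∀ i, negOf (fun i => ε * b i) i ≤ posOf z i := fun i => by
        have := hnn' i
        simp only [posOf, negOf] at *
        omega
      have hsc : ∑ i, negOf (fun i => ε * b i) i = ∑ i, posOf z i := by
        have h1 := sum_posOf_eq_sum_negOf hA hcmove
        have h2 := Finset.sum_le_sum (fun i (_ : i ∈ Finset.univ) => hcneg_le i)
        omega
      have hcneg := sum_le_pointwise_eq hcneg_le hsc
      -- the residual move m' = z + c moves z⁻ and has small degree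
      have hm'move : IsMove A (fun i => z i + ε * b i) := by
        show A.mulVec (fun i => z i + ε * b i) = 0
        have : (fun i => z i + ε * b i) = z + fun i => ε * b i := rfl
        rw [this, Matrix.mulVec_add, hz, hcmove, add_zero]
      have hm'ge : ∀ i, 0 ≤ ((negOf z i : ℤ)) + (fun i => z i + ε * b i) i := fun i => by
        have h1 := hnn' i
        simp only [posOf, negOf] at h1 ⊢
        omega
      have hm'deg : ∑ i, posOf (fun i => z i + ε * b i) i < ∑ i, negOf z i := by
        have e3 := sum_abs_eq_two_deg hA hm'move
        have e4 := sum_abs_eq_two_deg hA hz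
        rw [e3, e4] at hlt1
        omega
      by_cases hm'0 : (fun i => z i + ε * b i) = 0
      · -- c = -z, so b = ∓z
        rcases hε with rfl | rfl
        · right
          have : b = -z := by
            funext i
            have := congrFun hm'0 i
            simp only [Pi.zero_apply, Pi.neg_apply] at this ⊢
            omega
          exact this ▸ hbB
        · left
          have : b = z := by
            funext i
            have := congrFun hm'0 i
            simp only [Pi.zero_apply] at this ⊢
            omega
          exact this ▸ hbB
      · exact absurd (isolation hA hneg hy0 hBM hm'move hm'0 hm'ge hm'deg) (fun h => h)
    · -- reduction applied at z⁻ (symmetric)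
      have hlt1 : ∑ i, |ε * b i - z i| < ∑ i, |z i| := by
        have h1 : ∑ i, |natToInt (posOf z) i - (natToInt (negOf z) i + ε * b i)|
            = ∑ i, |ε * b i - z i| := Finset.sum_congr rfl fun i _ => by
          rw [abs_sub_comm]
          congr 1
          have := e2 i
          simp only [natToInt, posOf, negOf] at this ⊢
          omega
        have h2 : ∑ i, |natToInt (posOf z) i - natToInt (negOf z) i| = ∑ i, |z i| :=
          Finset.sum_congr rfl fun i _ => by rw [e2 i]
        rw [h1, h2] at hlt
        exact hlt
      have hc0 : (fun i => ε * b i) ≠ 0 := by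
        intro h
        have h1 : ∑ i, |ε * b i - z i| = ∑ i, |z i| := Finset.sum_congr rfl fun i _ => by
          have := congrFun h i
          simp only [Pi.zero_apply] at this
          rw [this, zero_sub, abs_neg]
        rw [h1] at hlt1
        exact lt_irrefl _ hlt1
      have hnn' : ∀ i, 0 ≤ ((negOf z i : ℤ)) + (fun i => ε * b i) i := fun i => hnn i
      have hdegc : ∑ i, negOf z i ≤ ∑ i, posOf (fun i => ε * b i) i := by
        by_contra hcon
        exact isolation hA hneg hy0 hBM hcmove hc0 hnn' (by omega)
      have hcneg_le : ∀ i, negOf (fun i => ε * b i) i ≤ negOf z i := fun i => by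
        have := hnn' i
        simp only [posOf, negOf] at *
        omega
      have hsc : ∑ i, negOf (fun i => ε * b i) i = ∑ i, negOf z i := by
        have h1 := sum_posOf_eq_sum_negOf hA hcmove
        have h2 := Finset.sum_le_sum (fun i (_ : i ∈ Finset.univ) => hcneg_le i)
        omega
      have hcneg := sum_le_pointwise_eq hcneg_le hsc
      have hm'move : IsMove A (fun i => ε * b i - z i) := by
        show A.mulVec (fun i => ε * b i - z i) = 0
        have : (fun i => ε * b i - z i) = (fun i => ε * b i) - z := rfl
        rw [this, Matrix.mulVec_sub, hz, hcmove, sub_zero]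
      have hm'ge : ∀ i, 0 ≤ ((posOf z i : ℤ)) + (fun i => ε * b i - z i) i := fun i => by
        have h1 := hnn' i
        simp only [posOf, negOf] at h1 ⊢
        omega
      have hm'deg : ∑ i, posOf (fun i => ε * b i - z i) i < ∑ i, posOf z i := by
        have e3 := sum_abs_eq_two_deg hA hm'move
        have e4 := sum_abs_eq_two_deg hA hz
        have h1 : ∑ i, |ε * b i - z i| = ∑ i, |(fun i => ε * b i - z i) i| := rfl
        rw [h1, e3, e4] at hlt1
        omega
      by_cases hm'0 : (fun i => ε * b i - z i) = 0
      · rcases hε with rfl | rfl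
        · left
          have : b = z := by
            funext i
            have := congrFun hm'0 i
            simp only [Pi.zero_apply] at this ⊢
            omega
          exact this ▸ hbB
        · right
          have : b = -z := by
            funext i
            have := congrFun hm'0 i
            simp only [Pi.zero_apply, Pi.neg_apply] at this ⊢
            omega
          exact this ▸ hbB
      · exact absurd (isolation hA hpos hx0 hBM hm'move hm'0 hm'ge hm'deg) (fun h => h)
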